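/- Example 4.2 (decaying-dimerization network X ⇌ 2Y, X → Z, Y → ∅ admits a DR solution): Let κ₁, κ₂, κ₃, κ₄ > 0, x₀, y₀ > 0, z₀ ≥ 0 satisfy κ₃ = 2κ₄ and κ₁ x₀ = κ₂ y₀² (equivalently κ₁/κ₂ = y₀²/x₀). Define x(t) := x₀ e^{−κ₃ t}, y(t) := y₀ e^{−κ₄ t}, z(t) := z₀ + x₀(1 − e^{−κ₃ t}). Then x, y, z satisfy the nonlinear mass-action system x'(t) = −κ₁x(t) + κ₂y(t)² − κ₃x(t), y'(t) = 2κ₁x(t) − 2κ₂y(t)² − κ₄y(t), z'(t) = κ₃x(t) with initial values x₀, y₀, z₀, and the DR condition κ₁ x(t) = κ₂ y(t)² holds for all t ≥ 0. -/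

import Mathlib

lemma exp_deriv_aux (a c t : ℝ) :
    HasDerivAt (fun s : ℝ => a * Real.exp (-c * s)) (-c * (a * Real.exp (-c * t))) t := by
  have h : HasDerivAt (fun s : ℝ => Real.exp (-c * s)) (Real.exp (-c * t) * (-c)) t := by
    have := ((hasDerivAt_id t).const_mul (-c)).exp
    simpa using this
  have := h.const_mul a
  refine this.congr_deriv ?_
  ring

/-- Example 4.2 (decaying-dimerization network `X ⇌ 2Y, X → Z, Y → ∅`): if `κ₃ = 2κ₄` and
`κ₁ x₀ = κ₂ y₀²`, then the explicit exponential functions `x(t), y(t), z(t)` solve the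
nonlinear mass-action system and satisfy the DR condition `κ₁ x(t) = κ₂ y(t)²` for all
`t ≥ 0`. -/
theorem example42_DR_solution
    (κ₁ κ₂ κ₃ κ₄ x₀ y₀ z₀ : ℝ)
    (h1 : 0 < κ₁) (h2 : 0 < κ₂) (h3 : 0 < κ₃) (h4 : 0 < κ₄)
    (hx₀ : 0 < x₀) (hy₀ : 0 < y₀) (hz₀ : 0 ≤ z₀)
    (hκ34 : κ₃ = 2 * κ₄)
    (hDR0 : κ₁ * x₀ = κ₂ * y₀ ^ 2) :
    let x : ℝ → ℝ := fun t => x₀ * Real.exp (-κ₃ * t)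
    let y : ℝ → ℝ := fun t => y₀ * Real.exp (-κ₄ * t)
    let z : ℝ → ℝ := fun t => z₀ + x₀ * (1 - Real.exp (-κ₃ * t))
    x 0 = x₀ ∧ y 0 = y₀ ∧ z 0 = z₀ ∧
    ∀ t ≥ (0:ℝ),
      HasDerivWithinAt x (-κ₁ * x t + κ₂ * (y t) ^ 2 - κ₃ * x t) (Set.Ici 0) t
      ∧ HasDerivWithinAt y (2 * κ₁ * x t - 2 * κ₂ * (y t) ^ 2 - κ₄ * y t) (Set.Ici 0) t
      ∧ HasDerivWithinAt z (κ₃ * x t) (Set.Ici 0) t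
      ∧ κ₁ * x t = κ₂ * (y t) ^ 2 := by
  intro x y z
  have hDR : ∀ t : ℝ, κ₁ * x t = κ₂ * (y t) ^ 2 := by
    intro t
    show κ₁ * (x₀ * Real.exp (-κ₃ * t)) = κ₂ * (y₀ * Real.exp (-κ₄ * t)) ^ 2
    have hexp : Real.exp (-κ₄ * t) ^ 2 = Real.exp (-κ₃ * t) := by
      rw [pow_two, ← Real.exp_add]
      congr 1
      rw [hκ34]; ring
    rw [mul_pow, hexp]
    nlinarith [hDR0]
  refine ⟨by simp [x], by simp [y], by simp [z], fun t _ => ?_⟩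
  refine ⟨?_, ?_, ?_, hDR t⟩
  · have := (exp_deriv_aux x₀ κ₃ t).hasDerivWithinAt (s := Set.Ici 0)
    refine this.congr_deriv ?_
    have h := hDR t
    simp only [x, y] at h ⊢
    nlinarith [h]
  · have := (exp_deriv_aux y₀ κ₄ t).hasDerivWithinAt (s := Set.Ici 0)
    refine this.congr_deriv ?_
    have h := hDR t
    simp only [x, y] at h ⊢
    nlinarith [h]
  · have hd : HasDerivAt z (κ₃ * (x₀ * Real.exp (-κ₃ * t))) t := by
      have h1' : HasDerivAt (fun s : ℝ => x₀ * (1 - Real.exp (-κ₃ * s)))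
          (-(-κ₃ * (x₀ * Real.exp (-κ₃ * t)))) t := by
        have h0 : HasDerivAt (fun s : ℝ => x₀ * Real.exp (-κ₃ * s))
            (-κ₃ * (x₀ * Real.exp (-κ₃ * t))) t := exp_deriv_aux x₀ κ₃ t
        have : HasDerivAt (fun s : ℝ => x₀ - x₀ * Real.exp (-κ₃ * s))
            (0 - (-κ₃ * (x₀ * Real.exp (-κ₃ * t)))) t := (hasDerivAt_const t x₀).sub h0
        convert this using 1
        · funext s; ring
        · ring
      have := (hasDerivAt_const t z₀).add h1'
      refine this.congr_deriv ?_
      ring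
    exact hd.hasDerivWithinAt
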